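/- Let (R, m) be a Noetherian local ring with finite residue field of cardinality q, and let π(x) ∈ R[x] be any polynomial whose image in (R/m)[x] is x^q - x. Define p₀(x) = x and pₙ(x) = π(p_{n-1}(x)) + p_{n-1}(x). Then for every n ≥ 1 and every r ∈ R, pₙ(r) - p_{n-1}(r) ∈ m^n. -/

import Mathlib

open Polynomial IsLocalRing

/-- The iterates obtained by successively applying the function `x ↦ π(x) + x`. -/
noncomputable def piIterate {R : Type*} [CommRing R] (π : R[X]) : ℕ → R[X]
  | 0 => X
  | n + 1 => π.comp (piIterate π n) + piIterate π n

theorem statement_19 {R : Type*} [CommRing R] [IsNoetherianRing R] [IsLocalRing R]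
    (q : ℕ) [Finite (ResidueField R)] (hq : Nat.card (ResidueField R) = q)
    (π : R[X]) (hπ : π.map (residue R) = X ^ q - X) :
    ∀ n : ℕ, 1 ≤ n → ∀ r : R,
      (piIterate π n).eval r - (piIterate π (n - 1)).eval r ∈ maximalIdeal R ^ n := by
  have : Fintype (ResidueField R) := Fintype.ofFinite _
  have hq' : Fintype.card (ResidueField R) = q := by
    rw [← Nat.card_eq_fintype_card, hq]
  -- π(a) ∈ m for any a
  have hmem : ∀ a : R, π.eval a ∈ maximalIdeal R := by
    intro a
    have : residue R (π.eval a) = 0 := by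
      rw [show residue R (π.eval a) = (π.map (residue R)).eval (residue R a) by
        rw [Polynomial.eval_map, Polynomial.eval₂_hom], hπ]
      simp [← hq', FiniteField.pow_card]
    exact Ideal.Quotient.eq_zero_iff_mem.mp this
  -- 1 + π'(a) ∈ m for any a
  have hder : ∀ a : R, 1 + π.derivative.eval a ∈ maximalIdeal R := by
    intro a
    have : residue R (1 + π.derivative.eval a) = 0 := by
      have h1 : residue R (π.derivative.eval a)
          = (π.derivative.map (residue R)).eval (residue R a) := by
        rw [Polynomial.eval_map, Polynomial.eval₂_hom]
      rw [map_add, h1, ← Polynomial.derivative_map, hπ]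
      have : (q : ResidueField R) = 0 := by
        rw [← hq']; exact FiniteField.cast_card_eq_zero _
      simp [this, derivative_X_pow]
    exact Ideal.Quotient.eq_zero_iff_mem.mp this
  -- key induction: π(pₙ(r)) ∈ m^(n+1)
  have key : ∀ (r : R) (n : ℕ), π.eval ((piIterate π n).eval r) ∈ maximalIdeal R ^ (n + 1) := by
    intro r n
    induction n with
    | zero => simpa [piIterate] using hmem r
    | succ n ih =>
      set a := (piIterate π n).eval r with ha
      have hs : (piIterate π (n + 1)).eval r = a + π.eval a := by
        simp [piIterate, add_comm]
        rfl
      obtain ⟨k, hk⟩ := π.binomExpansion a (π.eval a)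
      rw [hs, hk]
      have h1 : π.eval a + π.derivative.eval a * π.eval a
          = (1 + π.derivative.eval a) * π.eval a := by ring
      rw [h1]
      refine Ideal.add_mem _ ?_ ?_
      · have := Ideal.mul_mem_mul (hder a) ih
        simpa [pow_succ, mul_comm] using this
      · have h2 : π.eval a ^ 2 ∈ maximalIdeal R ^ (2 * (n + 1)) := by
          rw [mul_comm, pow_mul]; exact Ideal.pow_mem_pow ih 2
        have h3 : maximalIdeal R ^ (2 * (n + 1)) ≤ maximalIdeal R ^ (n + 1 + 1) :=
          Ideal.pow_le_pow_right (by omega)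
        exact Ideal.mul_mem_left _ k (h3 h2)
  intro n hn r
  obtain ⟨m, rfl⟩ := Nat.exists_eq_add_of_le hn
  have hs : (piIterate π (1 + m)).eval r - (piIterate π (1 + m - 1)).eval r
      = π.eval ((piIterate π m).eval r) := by
    rw [show 1 + m = m + 1 by ring]
    simp [piIterate]
  rw [hs, show 1 + m = m + 1 by ring]
  exact key r m
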